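/- arXiv:2405.14929 — 2 statements merged into one kernel-verified Lean document; each statement's English description precedes it below -/
import Mathlib

section
/- If ψ₁ and ψ₂ are states on a unital C*-algebra with ||ψ₁ - ψ₂|| = 2 (orthogonal states), then ψ₁ and ψ₂ are independent: any positive linear functional f with ψ₁ - f and ψ₂ - f both positive must be zero. -/
open ComplexOrder

section Aux
variable {C : Type*} [CStarAlgebra C] [PartialOrder C] [StarOrderedRing C]

lemma aux_nonneg_apply (g : C →L[ℂ] ℂ) (hg : ∀ a : C, 0 ≤ g (star a * a))
    {p : C} (hp : 0 ≤ p) : 0 ≤ g p := by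
  have hq := StarOrderedRing.nonneg_iff.mp hp
  clear hp
  induction hq using AddSubmonoid.closure_induction with
  | mem x hx => obtain ⟨s, rfl⟩ := hx; exact hg s
  | zero => simp
  | add x y _ _ hx hy => rw [map_add]; exact add_nonneg hx hy

lemma aux_mono (g : C →L[ℂ] ℂ) (hg : ∀ a : C, 0 ≤ g (star a * a))
    {x y : C} (hxy : x ≤ y) : g x ≤ g y := by
  have := aux_nonneg_apply g hg (sub_nonneg.mpr hxy)
  rw [map_sub] at this
  exact sub_nonneg.mp this

lemma aux_smul_one (g : C →L[ℂ] ℂ) (r : ℝ) : g (algebraMap ℝ C r) = (r : ℂ) * g 1 := by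
  rw [Algebra.algebraMap_eq_smul_one, ← Complex.coe_smul, map_smul, smul_eq_mul]

lemma aux_real_bound (g : C →L[ℂ] ℂ) (hg : ∀ a : C, 0 ≤ g (star a * a))
    {h : C} (hh : IsSelfAdjoint h) :
    (g h).im = 0 ∧ |(g h).re| ≤ ‖h‖ * (g 1).re := by
  have hg1 : 0 ≤ g 1 := by simpa using hg 1
  obtain ⟨hg1re, hg1im⟩ := Complex.le_def.mp hg1
  simp only [Complex.zero_re, Complex.zero_im] at hg1re hg1im
  have hub := aux_mono g hg hh.le_algebraMap_norm_self
  have hlb := aux_mono g hg hh.neg_algebraMap_norm_le_self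
  rw [aux_smul_one] at hub
  rw [map_neg, aux_smul_one] at hlb
  obtain ⟨hub1, hub2⟩ := Complex.le_def.mp hub
  obtain ⟨hlb1, hlb2⟩ := Complex.le_def.mp hlb
  rw [Complex.re_ofReal_mul] at hub1
  rw [Complex.im_ofReal_mul, ← hg1im, mul_zero] at hub2
  rw [Complex.neg_re, Complex.re_ofReal_mul] at hlb1
  exact ⟨hub2, abs_le.mpr ⟨hlb1, hub1⟩⟩

lemma aux_star_apply (g : C →L[ℂ] ℂ) (hg : ∀ a : C, 0 ≤ g (star a * a)) (x : C) :
    g (star x) = (starRingEnd ℂ) (g x) := by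
  have key : ∀ h : C, IsSelfAdjoint h → (starRingEnd ℂ) (g h) = g h := fun h hh =>
    Complex.conj_eq_iff_im.mpr (aux_real_bound g hg hh).1
  have hprod : Complex.I * ((2 : ℂ)⁻¹ * Complex.I) = -(2 : ℂ)⁻¹ := by
    rw [mul_comm, mul_assoc, Complex.I_mul_I]; ring
  have hh : IsSelfAdjoint (((2 : ℂ)⁻¹) • (x + star x)) := by
    rw [IsSelfAdjoint, star_smul, star_add, star_star]
    rw [show star ((2 : ℂ)⁻¹) = (2 : ℂ)⁻¹ by simp]
    module
  have hk : IsSelfAdjoint ((((2 : ℂ)⁻¹) * Complex.I) • (star x - x)) := by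
    rw [IsSelfAdjoint, star_smul, star_sub, star_star]
    rw [show star ((2 : ℂ)⁻¹ * Complex.I) = -((2 : ℂ)⁻¹ * Complex.I) by
      simp [Complex.star_def, map_mul]]
    module
  have e2 : g x = g (((2 : ℂ)⁻¹) • (x + star x))
      + Complex.I * g ((((2 : ℂ)⁻¹) * Complex.I) • (star x - x)) := by
    rw [← smul_eq_mul, ← map_smul, ← map_add]
    congr 1
    rw [smul_smul, hprod]
    module
  have e1 : g (star x) = g (((2 : ℂ)⁻¹) • (x + star x))
      - Complex.I * g ((((2 : ℂ)⁻¹) * Complex.I) • (star x - x)) := by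
    rw [← smul_eq_mul, ← map_smul, ← map_sub]
    congr 1
    rw [smul_smul, hprod]
    module
  rw [e1, e2, map_add, map_mul, Complex.conj_I, key _ hh, key _ hk]
  ring

lemma aux_norm_le (g₁ g₂ : C →L[ℂ] ℂ) (h₁ : ∀ a : C, 0 ≤ g₁ (star a * a))
    (h₂ : ∀ a : C, 0 ≤ g₂ (star a * a)) :
    ‖g₁ - g₂‖ ≤ (g₁ 1).re + (g₂ 1).re := by
  have hg1 : 0 ≤ (g₁ 1).re := by
    have := Complex.le_def.mp (show (0:ℂ) ≤ g₁ 1 by simpa using h₁ 1); simpa using this.1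
  have hg2 : 0 ≤ (g₂ 1).re := by
    have := Complex.le_def.mp (show (0:ℂ) ≤ g₂ 1 by simpa using h₂ 1); simpa using this.1
  set φ := g₁ - g₂ with hφ
  refine ContinuousLinearMap.opNorm_le_bound _ (by positivity) fun x => ?_
  rcases eq_or_ne (φ x) 0 with h0 | h0
  · simp only [h0, norm_zero]; positivity
  · set c : ℂ := (starRingEnd ℂ) (φ x) with hc
    set y : C := c • x with hy
    have hφy : φ y = ((‖φ x‖ : ℂ)) ^ 2 := by
      rw [hy, map_smul, hc, smul_eq_mul, mul_comm, Complex.mul_conj']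
    set h : C := ((2 : ℂ)⁻¹) • (y + star y) with hh_def
    have hh : IsSelfAdjoint h := by
      rw [hh_def, IsSelfAdjoint, star_smul, star_add, star_star]
      rw [show star ((2 : ℂ)⁻¹) = (2 : ℂ)⁻¹ by simp]
      rw [add_comm]
    have hstar : φ (star y) = (starRingEnd ℂ) (φ y) := by
      rw [hφ]
      simp only [ContinuousLinearMap.sub_apply, map_sub]
      rw [aux_star_apply g₁ h₁, aux_star_apply g₂ h₂]
    have hφh : φ h = ((‖φ x‖ : ℂ)) ^ 2 := by
      rw [hh_def, map_smul, map_add, hstar, hφy, smul_eq_mul]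
      rw [← Complex.ofReal_pow, Complex.conj_ofReal]
      push_cast
      ring
    have hnh : ‖h‖ ≤ ‖φ x‖ * ‖x‖ := by
      have hys : ‖y + star y‖ ≤ 2 * ‖y‖ := by
        simpa [norm_star, two_mul] using norm_add_le y (star y)
      have hyx : ‖y‖ = ‖φ x‖ * ‖x‖ := by
        rw [hy, norm_smul, hc, RCLike.norm_conj]
      calc ‖h‖ = ‖((2:ℂ)⁻¹)‖ * ‖y + star y‖ := by rw [hh_def, norm_smul]
        _ ≤ ‖((2:ℂ)⁻¹)‖ * (2 * ‖y‖) := by gcongr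
        _ = ‖y‖ := by rw [show ‖((2:ℂ)⁻¹)‖ = 1/2 by norm_num]; ring
        _ = ‖φ x‖ * ‖x‖ := hyx
    have hb1 := aux_real_bound g₁ h₁ hh
    have hb2 := aux_real_bound g₂ h₂ hh
    have hre : (φ h).re = (g₁ h).re - (g₂ h).re := by
      rw [hφ]; simp
    have h1 : (φ h).re = ‖φ x‖ ^ 2 := by
      rw [hφh, ← Complex.ofReal_pow, Complex.ofReal_re]
    have key : ‖φ x‖ ^ 2 ≤ (‖φ x‖ * ‖x‖) * ((g₁ 1).re + (g₂ 1).re) := by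
      calc ‖φ x‖ ^ 2 = (φ h).re := h1.symm
        _ ≤ |(g₁ h).re| + |(g₂ h).re| := by
            rw [hre]; exact (le_abs_self _).trans (abs_sub _ _)
        _ ≤ ‖h‖ * (g₁ 1).re + ‖h‖ * (g₂ 1).re := add_le_add hb1.2 hb2.2
        _ = ‖h‖ * ((g₁ 1).re + (g₂ 1).re) := by ring
        _ ≤ (‖φ x‖ * ‖x‖) * ((g₁ 1).re + (g₂ 1).re) := by gcongr
    have hpos : 0 < ‖φ x‖ := norm_pos_iff.mpr h0
    nlinarith [key]

lemma aux_eq_zero (g : C →L[ℂ] ℂ) (hsa : ∀ h : C, IsSelfAdjoint h → g h = 0) :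
    g = 0 := by
  ext x
  have hprod : Complex.I * ((2 : ℂ)⁻¹ * Complex.I) = -(2 : ℂ)⁻¹ := by
    rw [mul_comm, mul_assoc, Complex.I_mul_I]; ring
  have hh : IsSelfAdjoint (((2 : ℂ)⁻¹) • (x + star x)) := by
    rw [IsSelfAdjoint, star_smul, star_add, star_star]
    rw [show star ((2 : ℂ)⁻¹) = (2 : ℂ)⁻¹ by simp]
    module
  have hk : IsSelfAdjoint ((((2 : ℂ)⁻¹) * Complex.I) • (star x - x)) := by
    rw [IsSelfAdjoint, star_smul, star_sub, star_star]
    rw [show star ((2 : ℂ)⁻¹ * Complex.I) = -((2 : ℂ)⁻¹ * Complex.I) by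
      simp [Complex.star_def, map_mul]]
    module
  have e2 : g x = g (((2 : ℂ)⁻¹) • (x + star x))
      + Complex.I * g ((((2 : ℂ)⁻¹) * Complex.I) • (star x - x)) := by
    rw [← smul_eq_mul, ← map_smul, ← map_add]
    congr 1
    rw [smul_smul, hprod]
    module
  rw [e2, hsa _ hh, hsa _ hk]
  simp

end Aux

/-- Orthogonal states (i.e. `‖ψ₁ - ψ₂‖ = 2`) on a unital C*-algebra are independent:
any positive linear functional `f` with both `ψ₁ - f` and `ψ₂ - f` positive is zero. -/
theorem orthogonal_states_independent {C : Type*} [NormedRing C] [StarRing C]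
    [CStarRing C] [NormedAlgebra ℂ C] [StarModule ℂ C] [CompleteSpace C] [NormOneClass C]
    (ψ₁ ψ₂ : C →L[ℂ] ℂ)
    (hpos₁ : ∀ a : C, 0 ≤ ψ₁ (star a * a)) (hnorm₁ : ψ₁ 1 = 1)
    (hpos₂ : ∀ a : C, 0 ≤ ψ₂ (star a * a)) (hnorm₂ : ψ₂ 1 = 1)
    (horth : ‖ψ₁ - ψ₂‖ = 2) :
    ∀ f : C →L[ℂ] ℂ, (∀ a : C, 0 ≤ f (star a * a)) →
      (∀ a : C, 0 ≤ (ψ₁ - f) (star a * a)) →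
      (∀ a : C, 0 ≤ (ψ₂ - f) (star a * a)) → f = 0 := by
  intro f hf hf₁ hf₂
  letI : CStarAlgebra C := ⟨⟩
  letI := CStarAlgebra.spectralOrder C
  letI := CStarAlgebra.spectralOrderedRing C
  -- Step 1 : `f 1 = 0`
  have hsub : ψ₁ - ψ₂ = (ψ₁ - f) - (ψ₂ - f) := by abel
  have hb := aux_norm_le (ψ₁ - f) (ψ₂ - f) hf₁ hf₂
  rw [← hsub, horth] at hb
  have e1 : ((ψ₁ - f) 1).re = 1 - (f 1).re := by
    simp [ContinuousLinearMap.sub_apply, hnorm₁]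
  have e2 : ((ψ₂ - f) 1).re = 1 - (f 1).re := by
    simp [ContinuousLinearMap.sub_apply, hnorm₂]
  have hf1 : (0 : ℂ) ≤ f 1 := by simpa using hf 1
  obtain ⟨hre, him⟩ := Complex.le_def.mp hf1
  simp only [Complex.zero_re, Complex.zero_im] at hre him
  have hfre : (f 1).re = 0 := by
    rw [e1, e2] at hb
    linarith
  have hf10 : f 1 = 0 := by
    apply Complex.ext <;> simp [hfre, ← him]
  -- Step 2 : `f` vanishes on nonnegative elements
  have hnn : ∀ p : C, 0 ≤ p → f p = 0 := by
    intro p hp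
    have hps : IsSelfAdjoint p := IsSelfAdjoint.of_nonneg hp
    have h1 : f p ≤ f (algebraMap ℝ C ‖p‖) := aux_mono f hf hps.le_algebraMap_norm_self
    rw [aux_smul_one, hf10, mul_zero] at h1
    exact le_antisymm h1 (aux_nonneg_apply f hf hp)
  -- Step 3 : `f` vanishes on selfadjoint elements
  have hsa : ∀ h : C, IsSelfAdjoint h → f h = 0 := by
    intro h hh
    have hp : (0 : C) ≤ h + algebraMap ℝ C ‖h‖ := by
      have h2 := sub_nonneg.mpr hh.neg_algebraMap_norm_le_self
      rwa [sub_neg_eq_add] at h2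
    have h3 := hnn _ hp
    rwa [map_add, aux_smul_one, hf10, mul_zero, add_zero] at h3
  -- Step 4 : conclude
  exact aux_eq_zero f hsa
end

section
/- Let ω be a product state on a tensor product C*-algebra A ⊗ B, τ an automorphism, A ∈ A⊗1 and B ∈ 1⊗B local elements. Suppose ||τ(A) - A_r|| < C_A e^{-ar}||A|| and ||τ(B) - B_r|| < C_B e^{-ar}||B|| for elements A_r, B_r with disjoint supports satisfying ω(A_r) = ω(B_r) = 0, and ψ = ω∘τ with ψ(A) = ψ(B) = 0. Then |ψ(AB) - ψ(A)ψ(B)| ≤ C₀ ||A||·||B|| e^{-kd} for suitable constants C₀, k > 0, where d is three times the approximation radius (exponential clustering of SRE states). -/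
open ComplexOrder

/-- Exponential clustering of short-range entangled states. Let `ω` be a state on a
C*-algebra and `τ` an automorphism, with `ψ = ω ∘ τ`. There are constants `C₀, k > 0`
(depending only on `C_A, C_B, a`) such that: for any approximation radius `s`, and
elements `A, B` with `ψ(A) = ψ(B) = 0` admitting approximants `Ar, Br` with disjoint
supports (so that `ω(Ar·Br) = ω(Ar)·ω(Br)`), `ω(Ar) = ω(Br) = 0`, and
`‖τ(A) - Ar‖ < C_A e^{-a s}‖A‖`, `‖τ(B) - Br‖ < C_B e^{-a s}‖B‖`, one has
`|ψ(AB) - ψ(A)ψ(B)| ≤ C₀‖A‖‖B‖ e^{-k d}` where `d = 3s`. -/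
theorem sre_exponential_clustering {C : Type*} [NormedRing C] [StarRing C]
    [CStarRing C] [NormedAlgebra ℂ C] [StarModule ℂ C] [CompleteSpace C]
    (ω : C →ₗ[ℂ] ℂ)
    (hωpos : ∀ a : C, 0 ≤ ω (star a * a)) (hωnorm : ω 1 = 1)
    (τ : C ≃⋆ₐ[ℂ] C)
    (CA CB a : ℝ) (hCA : 0 < CA) (hCB : 0 < CB) (ha : 0 < a) :
    ∃ C₀ k : ℝ, 0 < C₀ ∧ 0 < k ∧
      ∀ (s : ℕ) (A B Ar Br : C),
        ω (Ar * Br) = ω Ar * ω Br →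
        ω Ar = 0 → ω Br = 0 →
        ‖τ A - Ar‖ < CA * Real.exp (-(a * s)) * ‖A‖ →
        ‖τ B - Br‖ < CB * Real.exp (-(a * s)) * ‖B‖ →
        ω (τ A) = 0 → ω (τ B) = 0 →
        ‖ω (τ (A * B)) - ω (τ A) * ω (τ B)‖
          ≤ C₀ * ‖A‖ * ‖B‖ * Real.exp (-(k * (3 * s))) := by
  letI : CStarAlgebra C := ⟨⟩
  letI : PartialOrder C := CStarAlgebra.spectralOrder C
  letI : StarOrderedRing C := CStarAlgebra.spectralOrderedRing C
  have hmono : ∀ x : C, 0 ≤ x → 0 ≤ ω x := by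
    intro x hx
    rw [StarOrderedRing.nonneg_iff] at hx
    induction hx using AddSubmonoid.closure_induction with
    | mem y hy => obtain ⟨s, rfl⟩ := hy; exact hωpos s
    | zero => simp
    | add y z _ _ hy hz => rw [map_add]; exact add_nonneg hy hz
  have hω_alg : ∀ r : ℝ, ω (algebraMap ℝ C r) = (r : ℂ) := by
    intro r
    rw [IsScalarTower.algebraMap_apply ℝ ℂ C, Algebra.algebraMap_eq_smul_one, map_smul,
      hωnorm, smul_eq_mul, mul_one]
    simp
  have hsa : ∀ x : C, IsSelfAdjoint x → ‖ω x‖ ≤ ‖x‖ := by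
    intro x hx
    have h1 : 0 ≤ ω (algebraMap ℝ C ‖x‖ - x) := hmono _ (sub_nonneg.2 hx.le_algebraMap_norm_self)
    have h2 : 0 ≤ ω (x - (-algebraMap ℝ C ‖x‖)) :=
      hmono _ (sub_nonneg.2 hx.neg_algebraMap_norm_le_self)
    rw [map_sub, hω_alg] at h1
    rw [map_sub, map_neg, hω_alg] at h2
    rw [Complex.le_def] at h1 h2
    simp only [Complex.sub_re, Complex.sub_im, Complex.zero_re, Complex.zero_im,
      Complex.ofReal_re, Complex.ofReal_im, Complex.neg_re, Complex.neg_im] at h1 h2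
    have him : (ω x).im = 0 := by linarith [h1.2, h2.2]
    have habs : ‖ω x‖ = |(ω x).re| := by
      rw [Complex.norm_def, Complex.normSq_apply, him]
      simp [← sq, Real.sqrt_sq_eq_abs]
    rw [habs, abs_le]
    constructor <;> linarith [h1.1, h2.1]
  have habs : ∀ x : C, ‖ω x‖ ≤ 2 * ‖x‖ := by
    intro x
    obtain ⟨p, hp⟩ : ∃ p : C, p = (2:ℂ)⁻¹ • (x + star x) := ⟨_, rfl⟩
    obtain ⟨q, hq⟩ : ∃ q : C, q = (2:ℂ)⁻¹ • (Complex.I • (star x - x)) := ⟨_, rfl⟩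
    have hpsa : IsSelfAdjoint p := by
      rw [hp, IsSelfAdjoint, star_smul, star_add, star_star, add_comm]
      simp
    have hqsa : IsSelfAdjoint q := by
      rw [hq, IsSelfAdjoint, star_smul, star_smul, star_sub, star_star]
      simp [smul_smul, smul_sub]
      module
    have hx : x = p + Complex.I • q := by
      rw [hp, hq]
      match_scalars <;> simp [Complex.ext_iff] <;> ring
    have hnp : ‖p‖ ≤ ‖x‖ := by
      rw [hp]
      calc ‖(2:ℂ)⁻¹ • (x + star x)‖ = ‖(2:ℂ)⁻¹‖ * ‖x + star x‖ := norm_smul _ _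
      _ ≤ (2⁻¹ : ℝ) * (‖x‖ + ‖star x‖) := by
          gcongr
          · simp
          · exact norm_add_le _ _
      _ = ‖x‖ := by rw [norm_star]; ring
    have hnq : ‖q‖ ≤ ‖x‖ := by
      rw [hq]
      calc ‖(2:ℂ)⁻¹ • (Complex.I • (star x - x))‖
          = ‖(2:ℂ)⁻¹‖ * (‖Complex.I‖ * ‖star x - x‖) := by rw [norm_smul, norm_smul]
      _ ≤ (2⁻¹ : ℝ) * (1 * (‖star x‖ + ‖x‖)) := by
          gcongr
          · simp
          · simp
          · exact norm_sub_le _ _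
      _ = ‖x‖ := by rw [norm_star]; ring
    calc ‖ω x‖ = ‖ω p + Complex.I * ω q‖ := by
          rw [hx, map_add, map_smul, smul_eq_mul]
    _ ≤ ‖ω p‖ + ‖Complex.I * ω q‖ := norm_add_le _ _
    _ = ‖ω p‖ + ‖ω q‖ := by rw [norm_mul]; simp
    _ ≤ ‖x‖ + ‖x‖ := add_le_add ((hsa p hpsa).trans hnp) ((hsa q hqsa).trans hnq)
    _ = 2 * ‖x‖ := by ring
  have hτnorm : ∀ x : C, ‖τ x‖ = ‖x‖ := fun x =>
    NonUnitalStarAlgHom.norm_map τ τ.injective x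
  refine ⟨2 * ((1 + CA) * CB + CA * (1 + CB) + CA * CB), a / 3, by positivity, by positivity, ?_⟩
  intro s A B Ar Br hprod hAr hBr hA hB hψA hψB
  have he0 : (0:ℝ) < Real.exp (-(a * s)) := Real.exp_pos _
  have he1 : Real.exp (-(a * s)) ≤ 1 := by
    apply Real.exp_le_one_iff.mpr
    have : (0:ℝ) ≤ a * s := by positivity
    linarith
  set e := Real.exp (-(a * s)) with he
  have hδA : ‖τ A - Ar‖ ≤ CA * e * ‖A‖ := hA.le
  have hδB : ‖τ B - Br‖ ≤ CB * e * ‖B‖ := hB.le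
  have hnAr : ‖Ar‖ ≤ (1 + CA) * ‖A‖ := by
    calc ‖Ar‖ = ‖τ A - (τ A - Ar)‖ := by rw [sub_sub_cancel]
    _ ≤ ‖τ A‖ + ‖τ A - Ar‖ := norm_sub_le _ _
    _ ≤ ‖A‖ + CA * e * ‖A‖ := by rw [hτnorm]; exact add_le_add le_rfl hδA
    _ ≤ (1 + CA) * ‖A‖ := by
        nlinarith [mul_nonneg (mul_nonneg hCA.le (norm_nonneg A)) (sub_nonneg.2 he1)]
  have hnBr : ‖Br‖ ≤ (1 + CB) * ‖B‖ := by
    calc ‖Br‖ = ‖τ B - (τ B - Br)‖ := by rw [sub_sub_cancel]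
    _ ≤ ‖τ B‖ + ‖τ B - Br‖ := norm_sub_le _ _
    _ ≤ ‖B‖ + CB * e * ‖B‖ := by rw [hτnorm]; exact add_le_add le_rfl hδB
    _ ≤ (1 + CB) * ‖B‖ := by
        nlinarith [mul_nonneg (mul_nonneg hCB.le (norm_nonneg B)) (sub_nonneg.2 he1)]
  have hkey : ω (τ (A * B)) - ω (τ A) * ω (τ B)
      = ω ((τ A - Ar) * Br) + ω (Ar * (τ B - Br)) + ω ((τ A - Ar) * (τ B - Br)) := by
    have hexp : τ A * τ B
        = (τ A - Ar) * Br + (Ar * (τ B - Br) + ((τ A - Ar) * (τ B - Br) + Ar * Br)) := by noncomm_ring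
    rw [map_mul, hexp, map_add, map_add, map_add, hprod, hAr, hψA]
    ring
  have h1 : ‖ω ((τ A - Ar) * Br)‖ ≤ 2 * (CA * e * ‖A‖ * ((1 + CB) * ‖B‖)) := by
    calc ‖ω ((τ A - Ar) * Br)‖ ≤ 2 * ‖(τ A - Ar) * Br‖ := habs _
    _ ≤ 2 * (‖τ A - Ar‖ * ‖Br‖) := by gcongr; exact norm_mul_le _ _
    _ ≤ 2 * (CA * e * ‖A‖ * ((1 + CB) * ‖B‖)) := by gcongr <;> positivity
  have h2 : ‖ω (Ar * (τ B - Br))‖ ≤ 2 * ((1 + CA) * ‖A‖ * (CB * e * ‖B‖)) := by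
    calc ‖ω (Ar * (τ B - Br))‖ ≤ 2 * ‖Ar * (τ B - Br)‖ := habs _
    _ ≤ 2 * (‖Ar‖ * ‖τ B - Br‖) := by gcongr; exact norm_mul_le _ _
    _ ≤ 2 * ((1 + CA) * ‖A‖ * (CB * e * ‖B‖)) := by gcongr <;> positivity
  have h3 : ‖ω ((τ A - Ar) * (τ B - Br))‖
      ≤ 2 * (CA * e * ‖A‖ * (CB * e * ‖B‖)) := by
    calc ‖ω ((τ A - Ar) * (τ B - Br))‖ ≤ 2 * ‖(τ A - Ar) * (τ B - Br)‖ := habs _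
    _ ≤ 2 * (‖τ A - Ar‖ * ‖τ B - Br‖) := by gcongr; exact norm_mul_le _ _
    _ ≤ 2 * (CA * e * ‖A‖ * (CB * e * ‖B‖)) := by gcongr <;> positivity
  have hre : Real.exp (-(a / 3 * (3 * s))) = e := by
    rw [he]; congr 1; ring
  rw [hkey, hre]
  calc ‖ω ((τ A - Ar) * Br) + ω (Ar * (τ B - Br)) + ω ((τ A - Ar) * (τ B - Br))‖
      ≤ ‖ω ((τ A - Ar) * Br) + ω (Ar * (τ B - Br))‖
        + ‖ω ((τ A - Ar) * (τ B - Br))‖ := norm_add_le _ _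
  _ ≤ (‖ω ((τ A - Ar) * Br)‖ + ‖ω (Ar * (τ B - Br))‖)
        + ‖ω ((τ A - Ar) * (τ B - Br))‖ := by
      gcongr
      exact norm_add_le _ _
  _ ≤ 2 * (CA * e * ‖A‖ * ((1 + CB) * ‖B‖)) + 2 * ((1 + CA) * ‖A‖ * (CB * e * ‖B‖))
        + 2 * (CA * e * ‖A‖ * (CB * e * ‖B‖)) := by gcongr
  _ ≤ 2 * ((1 + CA) * CB + CA * (1 + CB) + CA * CB) * ‖A‖ * ‖B‖ * e := by
      nlinarith [mul_nonneg (mul_nonneg (mul_nonneg (mul_nonneg hCA.le hCB.le) (norm_nonneg A))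
        (norm_nonneg B)) (mul_nonneg he0.le (sub_nonneg.2 he1)), norm_nonneg A, norm_nonneg B,
        he0.le, mul_nonneg (norm_nonneg A) (norm_nonneg B)]
end
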